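/- (First step in the proof of Theorem 3.1.) Let μ ≥ 1 be an integer, n a real number, and α₁ ≤ α₂ ≤ … ≤ α_μ real numbers satisfying the symmetry α_i + α_{μ+1−i} = n for all i ∈ {1,…,μ} and α_μ − α₁ ≤ 2. Let T ⊆ {1,…,μ} be nonempty and suppose that every i ∈ {1,…,μ} \ T satisfies α_i ≥ α₁ + 1. Then av_T := (1/|T|)·Σ_{i∈T} α_i ≤ n/2 = (1/μ)·Σ_{i=1}^{μ} α_i. -/

import Mathlib

/-- First step in the proof of Theorem 3.1: given the symmetry `α i + α (μ+1−i) = n` of the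
spectral numbers and `α μ − α 1 ≤ 2`, if every index outside `T` has `α i ≥ α 1 + 1`, then
the mean of `α` over `T` is at most `n/2`, which equals the mean over all of `{1,…,μ}`. -/
theorem stmt5 (μ : ℕ) (hμ : 1 ≤ μ) (n : ℝ) (α : ℕ → ℝ)
    (hmono : ∀ i j, 1 ≤ i → i ≤ j → j ≤ μ → α i ≤ α j)
    (hsym : ∀ i ∈ Finset.Icc 1 μ, α i + α (μ + 1 - i) = n)
    (hwidth : α μ - α 1 ≤ 2)
    (T : Finset ℕ) (hT : T ⊆ Finset.Icc 1 μ) (hTne : T.Nonempty)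
    (hmiss : ∀ i ∈ Finset.Icc 1 μ, i ∉ T → α i ≥ α 1 + 1)
    (avT : ℝ) (havT : avT = (1 / (T.card : ℝ)) * ∑ i ∈ T, α i) :
    avT ≤ n / 2 ∧ n / 2 = (1 / (μ : ℝ)) * ∑ i ∈ Finset.Icc 1 μ, α i := by
  have hflip : ∑ i ∈ Finset.Icc 1 μ, α (μ + 1 - i) = ∑ i ∈ Finset.Icc 1 μ, α i := by
    refine Finset.sum_nbij' (fun i => μ + 1 - i) (fun i => μ + 1 - i) ?_ ?_ ?_ ?_ ?_ <;>
      simp only [Finset.mem_Icc] <;> intros <;> first | omega | trivial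
  have htotal : ∑ i ∈ Finset.Icc 1 μ, α i = (μ : ℝ) * (n / 2) := by
    have h2 : (2 : ℝ) * ∑ i ∈ Finset.Icc 1 μ, α i = (μ : ℝ) * n := by
      have := Finset.sum_congr rfl hsym
      rw [Finset.sum_add_distrib, hflip, Finset.sum_const, Nat.card_Icc] at this
      simp at this
      linarith
    linarith
  have hμpos : (0 : ℝ) < (μ : ℝ) := by exact_mod_cast hμ
  refine ⟨?_, by field_simp [htotal]; rw [htotal]; ring⟩
  -- lower bound on α 1
  have h1 : α 1 + α μ = n := by
    have := hsym 1 (Finset.mem_Icc.mpr ⟨le_refl 1, hμ⟩); exact this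
  have hα1 : n / 2 - 1 ≤ α 1 := by linarith
  -- sum over the complement
  have hcompl : ∀ i ∈ Finset.Icc 1 μ \ T, n / 2 ≤ α i := by
    intro i hi
    rw [Finset.mem_sdiff] at hi
    have := hmiss i hi.1 hi.2
    linarith
  have hS : (((Finset.Icc 1 μ \ T).card : ℝ)) * (n / 2) ≤ ∑ i ∈ Finset.Icc 1 μ \ T, α i := by
    calc (((Finset.Icc 1 μ \ T).card : ℝ)) * (n / 2)
        = ∑ _i ∈ Finset.Icc 1 μ \ T, (n / 2) := by rw [Finset.sum_const]; ring
      _ ≤ ∑ i ∈ Finset.Icc 1 μ \ T, α i := Finset.sum_le_sum hcompl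
  have hsplit : ∑ i ∈ Finset.Icc 1 μ \ T, α i + ∑ i ∈ T, α i = ∑ i ∈ Finset.Icc 1 μ, α i :=
    Finset.sum_sdiff hT
  have hcard : (Finset.Icc 1 μ \ T).card = μ - T.card := by
    rw [Finset.card_sdiff_of_subset hT, Nat.card_Icc]; omega
  have hTle : T.card ≤ μ := by
    have := Finset.card_le_card hT; simpa [Nat.card_Icc] using this
  have hTpos : (0 : ℝ) < (T.card : ℝ) := by
    exact_mod_cast Finset.card_pos.mpr hTne
  have hcardR : ((Finset.Icc 1 μ \ T).card : ℝ) = (μ : ℝ) - (T.card : ℝ) := by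
    rw [hcard]; push_cast [hTle]; ring
  have hTsum : ∑ i ∈ T, α i ≤ (T.card : ℝ) * (n / 2) := by
    rw [hcardR] at hS
    nlinarith [htotal, hsplit]
  rw [havT, one_div]
  exact (inv_mul_le_iff₀ hTpos).mpr (by linarith)
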